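/- Let P be an n×n row-stochastic real matrix with absorbing states A = {a | P a a = 1}, and assume every state can reach some absorbing state. Let κ be the Markov kernel on Fin n given by κ(i) = the probability measure with mass P_{ij} at j, and for a starting state x let μ_x be the law of the trajectory (X_0, X_1, X_2, …) of the time-homogeneous Markov chain with transition kernel κ started at X_0 = x (the Ionescu–Tulcea measure on (Fin n)^ℕ). Then for every starting state x, μ_x–almost every trajectory enters A: the set of sequences ω ∈ (Fin n)^ℕ such that ω(k) ∉ A for all k has μ_x-measure zero. -/

import Mathlib

open Finset MeasureTheory

namespace AbsorbAux
variable {n : ℕ}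

lemma pow_entry_nonneg {Q : Matrix (Fin n) (Fin n) ℝ} (h : ∀ i j, 0 ≤ Q i j) :
    ∀ (k : ℕ) (i j : Fin n), 0 ≤ (Q ^ k) i j := by
  intro k
  induction k with
  | zero =>
    intro i j
    rw [pow_zero]
    rcases eq_or_ne i j with rfl | hij
    · simp [Matrix.one_apply]
    · simp [Matrix.one_apply, hij]
  | succ k ih =>
    intro i j
    rw [pow_succ, Matrix.mul_apply]
    exact Finset.sum_nonneg fun m _ => mul_nonneg (ih i m) (h m j)

lemma rowsum_pow_le_one {Q : Matrix (Fin n) (Fin n) ℝ} (h0 : ∀ i j, 0 ≤ Q i j)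
    (h1 : ∀ i, ∑ j, Q i j ≤ 1) : ∀ (k : ℕ) (i : Fin n), ∑ j, (Q ^ k) i j ≤ 1 := by
  intro k
  induction k with
  | zero =>
    intro i
    simp [Matrix.one_apply]
  | succ k ih =>
    intro i
    calc ∑ j, (Q ^ (k + 1)) i j = ∑ j, ∑ m, (Q ^ k) i m * Q m j := by
          simp [pow_succ, Matrix.mul_apply]
      _ = ∑ m, (Q ^ k) i m * ∑ j, Q m j := by
          rw [Finset.sum_comm]; simp [Finset.mul_sum]
      _ ≤ ∑ m, (Q ^ k) i m * 1 :=
          Finset.sum_le_sum fun m _ =>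
            mul_le_mul_of_nonneg_left (h1 m) (pow_entry_nonneg h0 k i m)
      _ ≤ 1 := by simpa using ih i

lemma rowsum_pow_add {Q : Matrix (Fin n) (Fin n) ℝ} (k l : ℕ) (i : Fin n) :
    ∑ j, (Q ^ (k + l)) i j = ∑ m, (Q ^ k) i m * ∑ j, (Q ^ l) m j := by
  rw [pow_add]
  simp only [Matrix.mul_apply, Finset.mul_sum]
  rw [Finset.sum_comm]

lemma rowsum_pow_antitone {Q : Matrix (Fin n) (Fin n) ℝ} (h0 : ∀ i j, 0 ≤ Q i j)
    (h1 : ∀ i, ∑ j, Q i j ≤ 1) {k l : ℕ} (hkl : k ≤ l) (i : Fin n) :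
    ∑ j, (Q ^ l) i j ≤ ∑ j, (Q ^ k) i j := by
  obtain ⟨d, rfl⟩ := Nat.exists_eq_add_of_le hkl
  rw [rowsum_pow_add]
  calc ∑ m, (Q ^ k) i m * ∑ j, (Q ^ d) m j
      ≤ ∑ m, (Q ^ k) i m * 1 :=
        Finset.sum_le_sum fun m _ =>
          mul_le_mul_of_nonneg_left (rowsum_pow_le_one h0 h1 d m)
            (pow_entry_nonneg h0 k i m)
    _ = ∑ j, (Q ^ k) i j := by simp

lemma path_sum (Q : Matrix (Fin n) (Fin n) ℝ) :
    ∀ (k : ℕ) (x : Fin n),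
      (∑ g : Fin (k + 1) → Fin n,
        (if g 0 = x then (1 : ℝ) else 0) * ∏ j : Fin k, Q (g j.castSucc) (g j.succ))
      = ∑ y, (Q ^ k) x y := by
  intro k
  induction k with
  | zero =>
    intro x
    have e1 : (∑ g : Fin 1 → Fin n,
          (if g 0 = x then (1 : ℝ) else 0) * ∏ j : Fin 0, Q (g j.castSucc) (g j.succ))
        = ∑ y : Fin n, (if y = x then (1 : ℝ) else 0) := by
      refine Fintype.sum_equiv (Equiv.funUnique (Fin 1) (Fin n)) _ _ fun g => ?_
      simp [Equiv.funUnique]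
    rw [e1, Finset.sum_ite_eq' Finset.univ x]
    simp [Matrix.one_apply, eq_comm]
  | succ k ih =>
    intro x
    have e1 : (∑ g : Fin (k + 1 + 1) → Fin n,
          (if g 0 = x then (1 : ℝ) else 0) * ∏ j : Fin (k + 1), Q (g j.castSucc) (g j.succ))
        = ∑ p : Fin n × (Fin (k + 1) → Fin n),
            (if p.1 = x then (1 : ℝ) else 0) *
              (Q p.1 (p.2 0) * ∏ j : Fin k, Q (p.2 j.castSucc) (p.2 j.succ)) := by
      refine (Fintype.sum_equiv (Fin.consEquiv fun _ : Fin (k + 2) => Fin n) _ _ ?_).symm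
      rintro ⟨x', t⟩
      simp only [Fin.consEquiv_apply, Fin.cons_zero]
      congr 1
      rw [Fin.prod_univ_succ]
      congr 1
    rw [e1, Fintype.sum_prod_type]
    simp only [ite_mul, one_mul, zero_mul]
    have pull : ∀ x1 : Fin n,
        (∑ t : Fin (k + 1) → Fin n,
          if x1 = x then Q x1 (t 0) * ∏ j : Fin k, Q (t j.castSucc) (t j.succ) else 0)
        = if x1 = x then
            (∑ t : Fin (k + 1) → Fin n, Q x1 (t 0) * ∏ j : Fin k, Q (t j.castSucc) (t j.succ))
          else 0 := by
      intro x1; split <;> simp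
    rw [Finset.sum_congr rfl fun x1 _ => pull x1, Finset.sum_ite_eq' Finset.univ x]
    simp only [Finset.mem_univ, if_true]
    have key : ∀ t : Fin (k + 1) → Fin n,
        Q x (t 0) * ∏ j : Fin k, Q (t j.castSucc) (t j.succ)
        = ∑ z, (if t 0 = z then (1 : ℝ) else 0) *
            (Q x z * ∏ j : Fin k, Q (t j.castSucc) (t j.succ)) := by
      intro t
      simp only [ite_mul, one_mul, zero_mul, Finset.sum_ite_eq, Finset.mem_univ, if_true]
    rw [Finset.sum_congr rfl fun t _ => key t, Finset.sum_comm]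
    have e2 : ∀ z : Fin n,
        (∑ t : Fin (k + 1) → Fin n, (if t 0 = z then (1 : ℝ) else 0) *
            (Q x z * ∏ j : Fin k, Q (t j.castSucc) (t j.succ)))
        = Q x z * ∑ y, (Q ^ k) z y := by
      intro z
      rw [← ih z, Finset.mul_sum]
      refine Finset.sum_congr rfl fun t _ => ?_
      ring
    rw [Finset.sum_congr rfl fun z _ => e2 z]
    rw [pow_succ']
    simp only [Matrix.mul_apply, Finset.mul_sum]
    rw [Finset.sum_comm]

end AbsorbAux

/-- Let `P` be a row-stochastic matrix on `Fin n` such that from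
every state some absorbing state `a` (one with `P a a = 1`) is reachable.  Let
`μ` be the law on `(Fin n)^ℕ` of the time-homogeneous Markov chain with
transition probabilities `P` started at `x`: the (Ionescu–Tulcea) probability
measure whose cylinder probabilities are
`μ {ω | ∀ j ≤ k, ω j = f j} = [f 0 = x] · ∏_{j < k} P (f j) (f (j+1))`.
Then `μ`-almost every trajectory enters the set `A = {a | P a a = 1}` of
absorbing states: the set of trajectories avoiding `A` forever is `μ`-null. -/
theorem almost_every_trajectory_absorbed
    (n : ℕ) (P : Matrix (Fin n) (Fin n) ℝ)
    (hnonneg : ∀ i j, 0 ≤ P i j)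
    (hrow : ∀ i, ∑ j, P i j = 1)
    (hreach : ∀ i : Fin n, ∃ (k : ℕ) (a : Fin n), P a a = 1 ∧ 0 < (P ^ k) i a)
    (x : Fin n) (μ : Measure (ℕ → Fin n)) [IsProbabilityMeasure μ]
    (hcyl : ∀ (k : ℕ) (f : ℕ → Fin n),
      μ {ω | ∀ j ≤ k, ω j = f j} =
        ENNReal.ofReal
          ((if f 0 = x then (1 : ℝ) else 0) *
            ∏ j ∈ Finset.range k, P (f j) (f (j + 1)))) :
    μ {ω : ℕ → Fin n | ∀ k : ℕ, ω k ∉ {a : Fin n | P a a = 1}} = 0 := by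
  classical
  set T : Set (ℕ → Fin n) := {ω : ℕ → Fin n | ∀ k : ℕ, ω k ∉ {a : Fin n | P a a = 1}} with hT
  set Q : Matrix (Fin n) (Fin n) ℝ :=
    Matrix.of (fun i j => if P j j = 1 then 0 else P i j) with hQ
  have hQ0 : ∀ i j, 0 ≤ Q i j := by
    intro i j; simp only [hQ, Matrix.of_apply]
    split
    · exact le_refl 0
    · exact hnonneg i j
  have hQP : ∀ i j, Q i j ≤ P i j := by
    intro i j; simp only [hQ, Matrix.of_apply]
    split
    · exact hnonneg i j
    · exact le_refl _
  have hQ1 : ∀ i, ∑ j, Q i j ≤ 1 := by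
    intro i
    calc ∑ j, Q i j ≤ ∑ j, P i j := Finset.sum_le_sum fun j _ => hQP i j
      _ = 1 := hrow i
  have hpowle : ∀ (k : ℕ) (i j : Fin n), (Q ^ k) i j ≤ (P ^ k) i j := by
    intro k
    induction k with
    | zero => intro i j; rw [pow_zero, pow_zero]
    | succ k ih =>
      intro i j
      rw [pow_succ, pow_succ, Matrix.mul_apply, Matrix.mul_apply]
      refine Finset.sum_le_sum fun m _ => ?_
      exact mul_le_mul (ih i m) (hQP m j) (hQ0 m j) (AbsorbAux.pow_entry_nonneg hnonneg k i m)
  have hcolzero : ∀ (m : ℕ) (a : Fin n), P a a = 1 → ∀ i, (Q ^ (m + 1)) i a = 0 := by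
    intro m a ha i
    rw [pow_succ, Matrix.mul_apply]
    refine Finset.sum_eq_zero fun z _ => ?_
    simp [hQ, ha]
  have hProw : ∀ (k : ℕ) (i : Fin n), ∑ j, (P ^ k) i j = 1 := by
    intro k
    induction k with
    | zero => intro i; simp [Matrix.one_apply]
    | succ k ih =>
      intro i
      calc ∑ j, (P ^ (k + 1)) i j = ∑ j, ∑ m, (P ^ k) i m * P m j := by
            simp [pow_succ, Matrix.mul_apply]
        _ = ∑ m, (P ^ k) i m * ∑ j, P m j := by
            rw [Finset.sum_comm]; simp [Finset.mul_sum]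
        _ = 1 := by simp only [hrow, mul_one]; exact ih i
  set s : ℕ → Fin n → ℝ := fun k i => ∑ j, (Q ^ k) i j with hs
  have hs0 : ∀ k i, 0 ≤ s k i := fun k i =>
    Finset.sum_nonneg fun j _ => AbsorbAux.pow_entry_nonneg hQ0 k i j
  -- from every state, some power has row sum < 1
  have hstep : ∀ i, ∃ m, 1 ≤ m ∧ s m i < 1 := by
    intro i
    by_cases hiA : P i i = 1
    · refine ⟨1, le_refl 1, ?_⟩
      have hz : ∀ j, Q i j = 0 := by
        intro j
        by_cases hj : P j j = 1
        · simp [hQ, hj]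
        · have hji : j ≠ i := fun h => hj (h ▸ hiA)
          have hPij : P i j = 0 := by
            have h1 : P i i + ∑ j ∈ Finset.univ.erase i, P i j = 1 := by
              rw [Finset.add_sum_erase _ _ (Finset.mem_univ i)]; exact hrow i
            have h2 : ∑ j ∈ Finset.univ.erase i, P i j = 0 := by linarith [hiA]
            have h3 : P i j ≤ ∑ j ∈ Finset.univ.erase i, P i j := by
              refine Finset.single_le_sum (fun m _ => hnonneg i m) ?_
              exact Finset.mem_erase.mpr ⟨hji, Finset.mem_univ j⟩
            have := hnonneg i j
            linarith
          simp [hQ, hj, hPij]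
      have : s 1 i = 0 := by
        simp only [hs, pow_one]
        exact Finset.sum_eq_zero fun j _ => hz j
      rw [this]; norm_num
    · obtain ⟨k, a, ha, hpos⟩ := hreach i
      have hk : k ≠ 0 := by
        rintro rfl
        rw [pow_zero, Matrix.one_apply] at hpos
        by_cases h : i = a
        · subst h; exact hiA ha
        · simp [h] at hpos
      obtain ⟨m, rfl⟩ := Nat.exists_eq_succ_of_ne_zero hk
      refine ⟨m + 1, Nat.succ_le_succ (Nat.zero_le m), ?_⟩
      have e1 : s (m + 1) i = ∑ j ∈ Finset.univ.erase a, (Q ^ (m + 1)) i j := by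
        simp only [hs]
        rw [Finset.sum_erase _ (hcolzero m a ha i)]
      have e2 : (∑ j ∈ Finset.univ.erase a, (Q ^ (m + 1)) i j)
          ≤ ∑ j ∈ Finset.univ.erase a, (P ^ (m + 1)) i j :=
        Finset.sum_le_sum fun j _ => hpowle (m + 1) i j
      have e3 : (P ^ (m + 1)) i a + ∑ j ∈ Finset.univ.erase a, (P ^ (m + 1)) i j = 1 := by
        rw [Finset.add_sum_erase _ _ (Finset.mem_univ a)]; exact hProw (m + 1) i
      rw [e1]
      linarith
  choose m hm1 hmlt using hstep
  -- uniform horizon M and contraction constant c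
  set M := Finset.univ.sup m with hM
  have hMle : ∀ i, m i ≤ M := fun i => Finset.le_sup (Finset.mem_univ i)
  have hsM : ∀ i, s M i < 1 := fun i =>
    lt_of_le_of_lt (AbsorbAux.rowsum_pow_antitone hQ0 hQ1 (hMle i) i) (hmlt i)
  set c := Finset.univ.sup' ⟨x, Finset.mem_univ x⟩ (fun i => s M i) with hc
  have hclt : c < 1 := (Finset.sup'_lt_iff _).mpr fun i _ => hsM i
  have hcle : ∀ i, s M i ≤ c := fun i => Finset.le_sup' _ (Finset.mem_univ i)
  have hc0 : (0 : ℝ) ≤ c := (hs0 M x).trans (hcle x)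
  have geom : ∀ (r : ℕ) (i : Fin n), s (M * r) i ≤ c ^ r := by
    intro r
    induction r with
    | zero =>
      intro i
      have h1 : s 0 i = 1 := by simp [hs, Matrix.one_apply]
      simp only [Nat.mul_zero, pow_zero, h1, le_refl]
    | succ r ih =>
      intro i
      have eM : M * (r + 1) = M + M * r := by ring
      rw [eM]
      calc s (M + M * r) i = ∑ mm, (Q ^ M) i mm * s (M * r) mm :=
            AbsorbAux.rowsum_pow_add M (M * r) i
        _ ≤ ∑ mm, (Q ^ M) i mm * c ^ r :=
            Finset.sum_le_sum fun mm _ =>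
              mul_le_mul_of_nonneg_left (ih mm) (AbsorbAux.pow_entry_nonneg hQ0 M i mm)
        _ = s M i * c ^ r := by rw [← Finset.sum_mul]
        _ ≤ c * c ^ r := mul_le_mul_of_nonneg_right (hcle i) (pow_nonneg hc0 r)
        _ = c ^ (r + 1) := (pow_succ' c r).symm
  -- covering bound
  have cover : ∀ k : ℕ, μ T ≤ ENNReal.ofReal (s k x) := by
    intro k
    set Gk := Finset.univ.filter
      (fun g : Fin (k + 1) → Fin n => ∀ j, P (g j) (g j) ≠ 1) with hGk
    set ext : (Fin (k + 1) → Fin n) → (ℕ → Fin n) :=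
      fun g j => g ⟨min j k, by omega⟩ with hext
    have hsub : T ⊆ ⋃ g ∈ (Gk : Finset (Fin (k + 1) → Fin n)),
        {ω : ℕ → Fin n | ∀ j ≤ k, ω j = ext g j} := by
      intro ω hω
      refine Set.mem_iUnion₂.mpr ⟨fun j : Fin (k + 1) => ω (j : ℕ), ?_, ?_⟩
      · simp only [hGk, Finset.mem_coe, Finset.mem_filter, Finset.mem_univ, true_and]
        intro j
        exact hω (j : ℕ)
      · intro j hj
        show ω j = ω (min j k)
        rw [Nat.min_eq_left hj]
    have h1 : μ T ≤ ∑ g ∈ Gk, μ {ω : ℕ → Fin n | ∀ j ≤ k, ω j = ext g j} :=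
      (measure_mono hsub).trans (measure_biUnion_finset_le Gk _)
    have h2 : ∀ g ∈ Gk, μ {ω : ℕ → Fin n | ∀ j ≤ k, ω j = ext g j}
        = ENNReal.ofReal ((if g 0 = x then (1 : ℝ) else 0) *
            ∏ j : Fin k, Q (g j.castSucc) (g j.succ)) := by
      intro g hg
      have hg' : ∀ j, P (g j) (g j) ≠ 1 := by
        simpa only [hGk, Finset.mem_filter, Finset.mem_univ, true_and] using hg
      rw [hcyl k (ext g)]
      congr 1
      have e0 : ext g 0 = g 0 := by
        show g ⟨min 0 k, _⟩ = g 0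
        congr 1
      congr 1
      · rw [← Fin.prod_univ_eq_prod_range (fun j => P (ext g j) (ext g (j + 1))) k]
        refine Finset.prod_congr rfl fun j _ => ?_
        have e1 : ext g (j : ℕ) = g j.castSucc := by
          show g ⟨min (j : ℕ) k, _⟩ = g j.castSucc
          congr 1
          exact Fin.ext (by simp [Nat.min_eq_left (le_of_lt j.isLt)])
        have e2 : ext g ((j : ℕ) + 1) = g j.succ := by
          show g ⟨min ((j : ℕ) + 1) k, _⟩ = g j.succ
          congr 1
          exact Fin.ext (by simp [Nat.min_eq_left (Nat.succ_le_of_lt j.isLt)])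
        rw [e1, e2]
        simp [hQ, hg' j.succ]
    have hnn : ∀ g ∈ Gk, (0 : ℝ) ≤ (if g 0 = x then (1 : ℝ) else 0) *
        ∏ j : Fin k, Q (g j.castSucc) (g j.succ) := by
      intro g _
      refine mul_nonneg ?_ (Finset.prod_nonneg fun j _ => hQ0 _ _)
      split <;> norm_num
    calc μ T ≤ ∑ g ∈ Gk, μ {ω : ℕ → Fin n | ∀ j ≤ k, ω j = ext g j} := h1
      _ = ∑ g ∈ Gk, ENNReal.ofReal ((if g 0 = x then (1 : ℝ) else 0) *
            ∏ j : Fin k, Q (g j.castSucc) (g j.succ)) := Finset.sum_congr rfl h2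
      _ = ENNReal.ofReal (∑ g ∈ Gk, (if g 0 = x then (1 : ℝ) else 0) *
            ∏ j : Fin k, Q (g j.castSucc) (g j.succ)) :=
          (ENNReal.ofReal_sum_of_nonneg hnn).symm
      _ ≤ ENNReal.ofReal (s k x) := by
          refine ENNReal.ofReal_le_ofReal ?_
          calc (∑ g ∈ Gk, (if g 0 = x then (1 : ℝ) else 0) *
                ∏ j : Fin k, Q (g j.castSucc) (g j.succ))
              ≤ ∑ g : Fin (k + 1) → Fin n, (if g 0 = x then (1 : ℝ) else 0) *
                ∏ j : Fin k, Q (g j.castSucc) (g j.succ) := by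
                refine Finset.sum_le_sum_of_subset_of_nonneg
                  (Finset.filter_subset _ _) fun g _ _ => ?_
                refine mul_nonneg ?_ (Finset.prod_nonneg fun j _ => hQ0 _ _)
                split <;> norm_num
            _ = s k x := AbsorbAux.path_sum Q k x
  -- conclude
  have hbound : ∀ r : ℕ, μ T ≤ ENNReal.ofReal (c ^ r) := fun r =>
    (cover (M * r)).trans (ENNReal.ofReal_le_ofReal (geom r x))
  have htend : Filter.Tendsto (fun r : ℕ => ENNReal.ofReal (c ^ r))
      Filter.atTop (nhds 0) := by
    have h := tendsto_pow_atTop_nhds_zero_of_lt_one hc0 hclt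
    have := ENNReal.tendsto_ofReal h
    simpa using this
  have : μ T ≤ 0 := ge_of_tendsto' htend hbound
  exact le_antisymm this zero_le
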